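/- Reduction from regret to approachability: Let S ⊆ {1} × ℝ^{d−1} be nonempty compact convex, K = cone(S)° ∩ B₁ (unit ball), and suppose points z₁,...,z_T ∈ ℝ^d (payoffs ℓ(x_t, y_t)) and θ₁,...,θ_T ∈ K satisfy ⟨θ_t, z_t⟩ ≤ 0 for all t, and each z_t ∈ {1} × ℝ^{d−1}. Then dist((1/T)∑_t z_t, S) ≤ (1 + ‖S‖) · (1/T) · [∑_t ⟨−z_t, θ_t⟩ − min_{θ ∈ K} ∑_t ⟨−z_t, θ⟩]. -/

import Mathlib

set_option maxHeartbeats 1000000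

local notation "E" d => EuclideanSpace ℝ (Fin (d + 1))

lemma abs_apply_le_norm {d : ℕ} (x : EuclideanSpace ℝ (Fin (d+1))) (i : Fin (d+1)) :
    |x i| ≤ ‖x‖ := by
  have h := abs_real_inner_le_norm (EuclideanSpace.single i (1:ℝ)) x
  rw [EuclideanSpace.inner_single_left, EuclideanSpace.norm_single] at h
  simpa using h

theorem regret_to_approachability
    (d T : ℕ) (hT : 0 < T)
    (S : Set (EuclideanSpace ℝ (Fin (d + 1)))) (hSne : S.Nonempty)
    (hScp : IsCompact S) (hSconv : Convex ℝ S)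
    (hS1 : ∀ s ∈ S, s 0 = 1)
    (M : ℝ) (hM : IsGreatest ((fun s => ‖s‖) '' S) M)
    (coneS : Set (EuclideanSpace ℝ (Fin (d + 1))))
    (hconeS : coneS = {w | ∃ a : ℝ, 0 ≤ a ∧ ∃ s ∈ S, w = a • s})
    (K : Set (EuclideanSpace ℝ (Fin (d + 1))))
    (hK : K = {θ | ∀ w ∈ coneS, (inner ℝ θ w : ℝ) ≤ 0} ∩ Metric.closedBall 0 1)
    (z : Fin T → EuclideanSpace ℝ (Fin (d + 1))) (hz1 : ∀ t, z t 0 = 1)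
    (θ : Fin T → EuclideanSpace ℝ (Fin (d + 1))) (hθ : ∀ t, θ t ∈ K)
    (horacle : ∀ t, (inner ℝ (θ t) (z t) : ℝ) ≤ 0) :
    Metric.infDist ((T : ℝ)⁻¹ • ∑ t, z t) S ≤
      (1 + M) * ((T : ℝ)⁻¹ *
        ((∑ t, (inner ℝ (-(z t)) (θ t) : ℝ)) -
          sInf {r : ℝ | ∃ p ∈ K, r = ∑ t, (inner ℝ (-(z t)) p : ℝ)})) := by
  set zb : EuclideanSpace ℝ (Fin (d+1)) := (T : ℝ)⁻¹ • ∑ t, z t with hzb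
  obtain ⟨s₀, hs₀S, hs₀M⟩ := hM.1
  have hM0 : 0 ≤ M := hs₀M ▸ norm_nonneg _
  have h1M : (0:ℝ) < 1 + M := by linarith
  -- zb 0 = 1
  have hzb0 : zb 0 = 1 := by
    have hsum : (∑ t, z t) 0 = ∑ t, z t 0 := by
      rw [WithLp.ofLp_sum]; exact Finset.sum_apply 0 Finset.univ (fun t => (z t).ofLp)
    have : zb 0 = (T:ℝ)⁻¹ * (∑ t, z t) 0 := rfl
    rw [this, hsum]
    simp [hz1]
    field_simp
  -- norm bound for S
  have hnormS : ∀ s ∈ S, ‖s‖ ≤ M := fun s hs => hM.2 ⟨s, hs, rfl⟩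
  -- 0 ∈ coneS
  have h0cone : (0 : EuclideanSpace ℝ (Fin (d+1))) ∈ coneS := by
    rw [hconeS]; exact ⟨0, le_refl _, hSne.choose, hSne.choose_spec, by simp⟩
  -- coneS convex
  have hconv : Convex ℝ coneS := by
    rw [hconeS]
    rintro x ⟨a, ha, s, hs, rfl⟩ y ⟨b, hb, u, hu, rfl⟩ p q hp hq hpq
    by_cases hc : p * a + q * b = 0
    · have h1 : p * a = 0 := by nlinarith [mul_nonneg hp ha, mul_nonneg hq hb]
      have h2 : q * b = 0 := by nlinarith [mul_nonneg hp ha, mul_nonneg hq hb]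
      refine ⟨0, le_refl _, s, hs, ?_⟩
      simp [smul_smul, h1, h2]
    · have hc' : 0 < p * a + q * b := lt_of_le_of_ne (by positivity) (Ne.symm hc)
      refine ⟨p * a + q * b, le_of_lt hc', (p*a/(p*a+q*b)) • s + (q*b/(p*a+q*b)) • u,
        hSconv hs hu (by positivity) (by positivity) (by field_simp), ?_⟩
      rw [smul_add, smul_smul, smul_smul, smul_smul, smul_smul]
      congr 1 <;> congr 1 <;> field_simp <;> ring
  -- coneS closed under nonneg scalar mult
  have hsmul : ∀ (c : ℝ), 0 ≤ c → ∀ w ∈ coneS, c • w ∈ coneS := by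
    intro c hc w hw
    rw [hconeS] at hw ⊢
    obtain ⟨a, ha, s, hs, rfl⟩ := hw
    exact ⟨c * a, mul_nonneg hc ha, s, hs, (smul_smul c a s)⟩
  -- lifting: infDist zb S ≤ (1+M) * dist zb w for w ∈ coneS
  have hlift : ∀ w ∈ coneS, Metric.infDist zb S ≤ (1 + M) * dist zb w := by
    intro w hw
    rw [hconeS] at hw
    obtain ⟨a, ha, s, hs, rfl⟩ := hw
    have h1 : Metric.infDist zb S ≤ dist zb s := Metric.infDist_le_dist_of_mem hs
    have h2 : dist zb s ≤ dist zb (a • s) + dist (a • s) s := dist_triangle _ _ _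
    have h3 : dist (a • s) s = |a - 1| * ‖s‖ := by
      rw [dist_eq_norm]
      have e : a • s - s = (a - 1) • s := by module
      rw [e, norm_smul, Real.norm_eq_abs]
    have h4 : |a - 1| ≤ dist zb (a • s) := by
      have hw0 : (a • s) 0 = a := by
        have : (a • s) 0 = a * s 0 := rfl
        rw [this, hS1 s hs, mul_one]
      have : a - 1 = ((a • s) - zb) 0 := by
        have : ((a • s) - zb) 0 = (a • s) 0 - zb 0 := rfl
        rw [this, hw0, hzb0]
      rw [this, dist_eq_norm']
      exact abs_apply_le_norm _ _
    have h5 : ‖s‖ ≤ M := hnormS s hs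
    have h6 : |a - 1| * ‖s‖ ≤ dist zb (a • s) * M :=
      mul_le_mul h4 h5 (norm_nonneg _) dist_nonneg
    nlinarith [dist_nonneg (x := zb) (y := a • s)]
  -- hence infDist zb S ≤ (1+M) * infDist zb coneS
  have hliftInf : Metric.infDist zb S ≤ (1 + M) * Metric.infDist zb coneS := by
    have hne : coneS.Nonempty := ⟨0, h0cone⟩
    rw [mul_comm, ← div_le_iff₀ h1M]
    have hiInf : Metric.infDist zb coneS = ⨅ y : coneS, dist zb y :=
      Metric.infDist_eq_iInf
    rw [hiInf]
    have : Nonempty coneS := hne.to_subtype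
    apply le_ciInf
    intro w
    rw [div_le_iff₀ h1M, mul_comm]
    exact hlift w w.2
  -- projection onto closure of coneS
  set C := closure coneS with hC
  have hCconv : Convex ℝ C := hconv.closure
  have hCne : C.Nonempty := ⟨0, subset_closure h0cone⟩
  obtain ⟨c, hcC, hcmin⟩ := exists_norm_eq_iInf_of_complete_convex hCne
    (isClosed_closure.isComplete) hCconv zb
  have hchar := (norm_eq_iInf_iff_real_inner_le_zero hCconv hcC).1 hcmin
  set p₀ : EuclideanSpace ℝ (Fin (d+1)) := zb - c with hp₀
  -- ⟨p₀, c⟩ = 0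
  have h2c : (2:ℝ) • c ∈ C := by
    have : Set.MapsTo (fun w => (2:ℝ) • w) coneS coneS := fun w hw => hsmul 2 (by norm_num) w hw
    exact this.closure (continuous_const_smul 2) hcC
  have hpc : (inner ℝ p₀ c : ℝ) = 0 := by
    have h1 := hchar ((2:ℝ) • c) h2c
    have h2 := hchar 0 (subset_closure h0cone)
    have e1 : (2:ℝ) • c - c = c := by module
    rw [e1] at h1
    rw [zero_sub, inner_neg_right] at h2
    linarith
  -- polar: ⟨p₀, w⟩ ≤ 0 for w ∈ coneS
  have hpolar : ∀ w ∈ coneS, (inner ℝ p₀ w : ℝ) ≤ 0 := by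
    intro w hw
    have h1 := hchar w (subset_closure hw)
    rw [inner_sub_right, hpc] at h1
    linarith
  -- choose p ∈ K with ‖p₀‖ ≤ ⟨zb, p⟩
  have hkey : ∃ p ∈ K, ‖p₀‖ ≤ (inner ℝ zb p : ℝ) := by
    by_cases hz : p₀ = 0
    · refine ⟨0, ?_, by simp [hz]⟩
      rw [hK]
      exact ⟨fun w _ => by simp, by simp⟩
    · refine ⟨‖p₀‖⁻¹ • p₀, ?_, ?_⟩
      · rw [hK]
        constructor
        · intro w hw
          rw [real_inner_smul_left]
          exact mul_nonpos_of_nonneg_of_nonpos (by positivity) (hpolar w hw)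
        · simp only [Metric.mem_closedBall, dist_zero_right, norm_smul, norm_inv, norm_norm]
          rw [inv_mul_cancel₀ (norm_ne_zero_iff.2 hz)]
      · have hze : zb = p₀ + c := by rw [hp₀]; abel
        have hcp : (inner ℝ c p₀ : ℝ) = 0 := by rw [real_inner_comm]; exact hpc
        rw [hze, inner_add_left, real_inner_smul_right, real_inner_smul_right,
          real_inner_self_eq_norm_sq, hcp]
        rw [mul_zero, add_zero, sq]
        rw [← mul_assoc, inv_mul_cancel₀ (norm_ne_zero_iff.2 hz), one_mul]
  obtain ⟨p, hpK, hpv⟩ := hkey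
  -- infDist zb S ≤ (1+M) * ⟨zb, p⟩
  have hmain : Metric.infDist zb S ≤ (1 + M) * (inner ℝ zb p : ℝ) := by
    calc Metric.infDist zb S ≤ (1 + M) * Metric.infDist zb coneS := hliftInf
    _ ≤ (1 + M) * ‖p₀‖ := by
        apply mul_le_mul_of_nonneg_left _ (le_of_lt h1M)
        rw [← Metric.infDist_closure]
        calc Metric.infDist zb C ≤ dist zb c := Metric.infDist_le_dist_of_mem hcC
        _ = ‖p₀‖ := by rw [dist_eq_norm]
    _ ≤ (1 + M) * (inner ℝ zb p : ℝ) := mul_le_mul_of_nonneg_left hpv (le_of_lt h1M)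
  -- now RHS bound
  set R : Set ℝ := {r : ℝ | ∃ p ∈ K, r = ∑ t, (inner ℝ (-(z t)) p : ℝ)} with hR
  have hKnorm : ∀ q ∈ K, ‖q‖ ≤ 1 := by
    intro q hq
    rw [hK] at hq
    simpa using hq.2
  have hbdd : BddBelow R := by
    refine ⟨-∑ t, ‖z t‖, ?_⟩
    rintro r ⟨q, hq, rfl⟩
    rw [← Finset.sum_neg_distrib]
    apply Finset.sum_le_sum
    intro t _
    have := abs_real_inner_le_norm (-(z t)) q
    have h2 : ‖q‖ ≤ 1 := hKnorm q hq
    have h3 : |(inner ℝ (-(z t)) q : ℝ)| ≤ ‖z t‖ := by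
      rw [norm_neg] at this
      nlinarith [norm_nonneg (z t), abs_nonneg (inner ℝ (-(z t)) q : ℝ)]
    have := neg_abs_le (inner ℝ (-(z t)) q : ℝ)
    linarith
  have hsInf : sInf R ≤ ∑ t, (inner ℝ (-(z t)) p : ℝ) := csInf_le hbdd ⟨p, hpK, rfl⟩
  have hA : 0 ≤ ∑ t, (inner ℝ (-(z t)) (θ t) : ℝ) := by
    apply Finset.sum_nonneg
    intro t _
    rw [inner_neg_left]
    have := horacle t
    rw [real_inner_comm] at this
    linarith
  have hinner : (inner ℝ zb p : ℝ) = (T:ℝ)⁻¹ * ∑ t, (inner ℝ (z t) p : ℝ) := by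
    rw [hzb, real_inner_smul_left, sum_inner]
  have hneg : ∑ t, (inner ℝ (-(z t)) p : ℝ) = -∑ t, (inner ℝ (z t) p : ℝ) := by
    rw [← Finset.sum_neg_distrib]
    congr 1; funext t; rw [inner_neg_left]
  have hTpos : (0:ℝ) < (T:ℝ)⁻¹ := by positivity
  have : (inner ℝ zb p : ℝ) ≤ (T:ℝ)⁻¹ * ((∑ t, (inner ℝ (-(z t)) (θ t) : ℝ)) - sInf R) := by
    rw [hinner]
    apply mul_le_mul_of_nonneg_left _ (le_of_lt hTpos)
    have : -sInf R ≥ ∑ t, (inner ℝ (z t) p : ℝ) := by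
      rw [hneg] at hsInf; linarith
    linarith
  calc Metric.infDist zb S ≤ (1 + M) * (inner ℝ zb p : ℝ) := hmain
  _ ≤ (1 + M) * ((T:ℝ)⁻¹ * ((∑ t, (inner ℝ (-(z t)) (θ t) : ℝ)) - sInf R)) :=
      mul_le_mul_of_nonneg_left this (le_of_lt h1M)
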